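/- For every z > 0 the following lower bounds hold: ν₊(z) ≥ [c_Y(-z) - c_Y(z)]₊ / (s(z) + |s(-z)|) + ν([z,∞)), and ν₋(z) ≥ [c_Y(z) - c_Y(-z)]₊ / (s(z) + |s(-z)|) + ν((-∞,-z]), where [a]₊ = max(a,0). -/

import Mathlib

set_option maxHeartbeats 1000000


open MeasureTheory Set Filter
open scoped ENNReal NNReal Classical

/-- The function `c_Y` of the paper: `c_Y y = ∫_{[0,∞)} min(s(y),s(w)) ν(dw)` for `y ≥ 0`,
`c_Y y = ∫_{(-∞,0)} min(|s(y)|,|s(w)|) ν(dw)` for `y < 0`. -/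
noncomputable def cY (s : ℝ → ℝ) (ν : Measure ℝ) (y : ℝ) : ℝ :=
  if 0 ≤ y then ∫ w in Ici (0 : ℝ), min (s y) (s w) ∂ν
  else ∫ w in Iio (0 : ℝ), min |s y| |s w| ∂ν

/-- The slope `(c_Y(z) - c_Y(-y))/(s(z) - s(-y))` in the definition of `ζ₊, ρ₊`. -/
noncomputable def slopeYPlus (s : ℝ → ℝ) (ν : Measure ℝ) (z y : ℝ) : ℝ :=
  (cY s ν z - cY s ν (-y)) / (s z - s (-y))

/-- The slope `(c_Y(y) - c_Y(-z))/(s(y) - s(-z))` in the definition of `ζ₋, ρ₋`. -/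
noncomputable def slopeYMinus (s : ℝ → ℝ) (ν : Measure ℝ) (z y : ℝ) : ℝ :=
  (cY s ν y - cY s ν (-z)) / (s y - s (-z))

/-- The set of `y > 0` attaining the infimum in the definition of `ρ₊(z)`. -/
def argYPlus (s : ℝ → ℝ) (ν : Measure ℝ) (z : ℝ) : Set ℝ :=
  {y | 0 < y ∧ ∀ x, 0 < x → slopeYPlus s ν z y ≤ slopeYPlus s ν z x}

/-- The set of `y > 0` attaining the supremum in the definition of `ρ₋(z)`. -/
def argYMinus (s : ℝ → ℝ) (ν : Measure ℝ) (z : ℝ) : Set ℝ :=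
  {y | 0 < y ∧ ∀ x, 0 < x → slopeYMinus s ν z x ≤ slopeYMinus s ν z y}

/-- `ζ₊(z) = -inf_{y>0} (c_Y(z)-c_Y(-y))/(s(z)-s(-y))` if attained, `0` otherwise. -/
noncomputable def zetaPlus (s : ℝ → ℝ) (ν : Measure ℝ) (z : ℝ) : ℝ :=
  if (argYPlus s ν z).Nonempty then -sInf (slopeYPlus s ν z '' Ioi 0) else 0

/-- `ζ₋(z) = sup_{y>0} (c_Y(y)-c_Y(-z))/(s(y)-s(-z))` if attained, `0` otherwise. -/
noncomputable def zetaMinus (s : ℝ → ℝ) (ν : Measure ℝ) (z : ℝ) : ℝ :=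
  if (argYMinus s ν z).Nonempty then sSup (slopeYMinus s ν z '' Ioi 0) else 0

/-- `ν₊(z) = ζ₊(z) + ν([z,∞))`, the tail distribution function of the supremum of the
stopped process for the optimal embedding. -/
noncomputable def nuPlus (s : ℝ → ℝ) (ν : Measure ℝ) (z : ℝ) : ℝ :=
  zetaPlus s ν z + (ν (Ici z)).toReal

/-- `ν₋(z) = ν((-∞,-z]) + ζ₋(z)`, the tail distribution function of minus the infimum of
the stopped process for the optimal embedding. -/
noncomputable def nuMinus (s : ℝ → ℝ) (ν : Measure ℝ) (z : ℝ) : ℝ :=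
  (ν (Iic (-z))).toReal + zetaMinus s ν z

section Aux
open scoped Topology

lemma integrable_min_u (μ : Measure ℝ) [IsFiniteMeasure μ] (u : ℝ → ℝ)
    (hu : Continuous u) (hu0 : ∀ w, 0 ≤ u w) (t : ℝ) :
    Integrable (fun w => min t (u w)) μ := by
  refine (integrable_const |t|).mono' (continuous_const.min hu).aestronglyMeasurable ?_
  filter_upwards with w
  rw [Real.norm_eq_abs, abs_le]
  rcases le_total t (u w) with h | h
  · rw [min_eq_left h]; exact ⟨neg_abs_le t, le_abs_self t⟩
  · rw [min_eq_right h]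
    exact ⟨le_trans (neg_nonpos.2 (abs_nonneg t)) (hu0 w), le_trans h (le_abs_self t)⟩

lemma gmin_mono (μ : Measure ℝ) [IsFiniteMeasure μ] (u : ℝ → ℝ)
    (hu : Continuous u) (hu0 : ∀ w, 0 ≤ u w) {t t' : ℝ} (h : t ≤ t') :
    ∫ w, min t (u w) ∂μ ≤ ∫ w, min t' (u w) ∂μ :=
  integral_mono (integrable_min_u μ u hu hu0 t) (integrable_min_u μ u hu hu0 t')
    (fun w => min_le_min h le_rfl)

lemma gmin_nonneg (μ : Measure ℝ) (u : ℝ → ℝ) (hu0 : ∀ w, 0 ≤ u w) {t : ℝ} (ht : 0 ≤ t) :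
    0 ≤ ∫ w, min t (u w) ∂μ :=
  integral_nonneg fun w => le_min ht (hu0 w)

lemma gmin_le (μ : Measure ℝ) [IsFiniteMeasure μ] (hμ1 : μ Set.univ ≤ 1)
    (u : ℝ → ℝ) (hu : Continuous u) (hu0 : ∀ w, 0 ≤ u w) {t : ℝ} (ht : 0 ≤ t) :
    ∫ w, min t (u w) ∂μ ≤ t := by
  have h1 : ∫ w, min t (u w) ∂μ ≤ ∫ _, t ∂μ :=
    integral_mono (integrable_min_u μ u hu hu0 t) (integrable_const t)
      (fun w => min_le_left _ _)
  have h2 : (μ Set.univ).toReal ≤ 1 := by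
    have := ENNReal.toReal_mono (by norm_num) hμ1
    simpa using this
  calc ∫ w, min t (u w) ∂μ ≤ (μ Set.univ).toReal • t := by rwa [integral_const] at h1
    _ ≤ t := by
        rw [smul_eq_mul]
        nlinarith [ENNReal.toReal_nonneg (a := μ Set.univ)]

lemma gmin_incr (μ : Measure ℝ) [IsFiniteMeasure μ] (u : ℝ → ℝ)
    (hu : Continuous u) (hu0 : ∀ w, 0 ≤ u w) {t t' : ℝ} (h : t ≤ t') :
    (∫ w, min t' (u w) ∂μ) - (∫ w, min t (u w) ∂μ) ≤ (t' - t) * (μ {w | t < u w}).toReal := by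
  have hint := integrable_min_u μ u hu hu0
  have hms : MeasurableSet {w | t < u w} := measurableSet_lt measurable_const hu.measurable
  rw [← integral_sub (hint t') (hint t)]
  have hle : ∫ w, (min t' (u w) - min t (u w)) ∂μ ≤
      ∫ w, ({w | t < u w}).indicator (fun _ => t' - t) w ∂μ := by
    refine integral_mono ((hint t').sub (hint t))
      ((integrable_const (t' - t)).indicator hms) ?_
    intro w
    by_cases hw : t < u w
    · simp only [Set.indicator_of_mem, hw, Set.mem_setOf_eq]
      have h1 : min t' (u w) ≤ t' := min_le_left _ _
      have h2 : t ≤ min t (u w) := le_min le_rfl hw.le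
      simpa using sub_le_sub h1 h2
    · have hw' : u w ≤ t := not_lt.1 hw
      simp only [Set.indicator_of_notMem, hw, Set.mem_setOf_eq, not_false_iff]
      rw [min_eq_right hw', min_eq_right (le_trans hw' h)]
      simp
  calc (∫ w, (min t' (u w) - min t (u w)) ∂μ) ≤ _ := hle
    _ = (t' - t) * (μ {w | t < u w}).toReal := by
        rw [integral_indicator_const _ hms, smul_eq_mul, mul_comm]; rfl

lemma gmin_le_add (μ : Measure ℝ) [IsFiniteMeasure μ] (hμ1 : μ Set.univ ≤ 1)
    (u : ℝ → ℝ) (hu : Continuous u) (hu0 : ∀ w, 0 ≤ u w) {T t : ℝ} (hT : 0 ≤ T) :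
    ∫ w, min t (u w) ∂μ ≤ T + t * (μ {w | T < u w}).toReal := by
  have hms : MeasurableSet {w | T < u w} := measurableSet_lt measurable_const hu.measurable
  have hle : ∫ w, min t (u w) ∂μ ≤
      ∫ w, (T + ({w | T < u w}).indicator (fun _ => t) w) ∂μ := by
    refine integral_mono (integrable_min_u μ u hu hu0 t)
      ((integrable_const T).add ((integrable_const t).indicator hms)) ?_
    intro w
    by_cases hw : T < u w
    · simp only [Set.indicator_of_mem, hw, Set.mem_setOf_eq]
      have := min_le_left t (u w); linarith
    · have hw' : u w ≤ T := not_lt.1 hw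
      simp only [Set.indicator_of_notMem, hw, Set.mem_setOf_eq, not_false_iff]
      have := min_le_right t (u w); simpa using le_trans this (by linarith)
  have h2 : (μ Set.univ).toReal ≤ 1 := by
    have := ENNReal.toReal_mono (by norm_num) hμ1
    simpa using this
  calc ∫ w, min t (u w) ∂μ ≤ _ := hle
    _ = T * (μ Set.univ).toReal + t * (μ {w | T < u w}).toReal := by
        rw [integral_add (integrable_const T) ((integrable_const t).indicator hms),
          integral_const, integral_indicator_const _ hms, smul_eq_mul, smul_eq_mul]
        simp only [Measure.real]
        ring
    _ ≤ T + t * (μ {w | T < u w}).toReal := by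
        nlinarith [ENNReal.toReal_nonneg (a := μ Set.univ)]

lemma gmin_lipschitz (μ : Measure ℝ) [IsFiniteMeasure μ] (hμ1 : μ Set.univ ≤ 1)
    (u : ℝ → ℝ) (hu : Continuous u) (hu0 : ∀ w, 0 ≤ u w) :
    Continuous (fun t => ∫ w, min t (u w) ∂μ) := by
  have h2 : (μ Set.univ).toReal ≤ 1 := by
    have := ENNReal.toReal_mono (by norm_num) hμ1
    simpa using this
  have : LipschitzWith 1 (fun t => ∫ w, min t (u w) ∂μ) := by
    refine LipschitzWith.of_dist_le_mul fun a b => ?_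
    rw [Real.dist_eq, Real.dist_eq, NNReal.coe_one, one_mul]
    have key : ∀ x y : ℝ, (∫ w, min x (u w) ∂μ) - (∫ w, min y (u w) ∂μ) ≤ |x - y| := by
      intro x y
      rw [← integral_sub (integrable_min_u μ u hu hu0 x) (integrable_min_u μ u hu hu0 y)]
      have h1 : ∫ w, (min x (u w) - min y (u w)) ∂μ ≤ ∫ _, |x - y| ∂μ := by
        refine integral_mono (((integrable_min_u μ u hu hu0 x)).sub
          (integrable_min_u μ u hu hu0 y)) (integrable_const _) ?_
        intro w
        simp only []
        show min x (u w) - min y (u w) ≤ |x - y|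
        have habs := le_abs_self (x - y)
        have habs2 := abs_nonneg (x - y)
        rcases le_total x (u w) with h | h <;> rcases le_total y (u w) with h' | h'
        · rw [min_eq_left h, min_eq_left h']; linarith
        · rw [min_eq_left h, min_eq_right h']; linarith
        · rw [min_eq_right h, min_eq_left h']; linarith
        · rw [min_eq_right h, min_eq_right h']; linarith
      rw [integral_const, smul_eq_mul] at h1
      simp only [Measure.real] at h1
      nlinarith [abs_nonneg (x - y), ENNReal.toReal_nonneg (a := μ Set.univ)]
    rw [abs_le]
    constructor
    · have := key b a; rw [abs_sub_comm] at this; linarith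
    · exact key a b
  exact this.continuous


lemma minimizer_nonpos (μ : Measure ℝ) [IsFiniteMeasure μ] (u : ℝ → ℝ)
    (hu : Continuous u) (hu0 : ∀ w, 0 ≤ u w)
    (p : ℝ → ℝ) (hpm : StrictMono p) (hp0 : p 0 = 0)
    (E c : ℝ) (hE : 0 < E)
    (y₀ : ℝ) (hy₀ : 0 < y₀)
    (hmin : ∀ x, 0 < x → (c - ∫ w, min (p y₀) (u w) ∂μ) / (E + p y₀) ≤
      (c - ∫ w, min (p x) (u w) ∂μ) / (E + p x)) :
    (c - ∫ w, min (p y₀) (u w) ∂μ) / (E + p y₀) ≤ 0 := by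
  set g : ℝ → ℝ := fun t => ∫ w, min t (u w) ∂μ with hg
  by_contra hpos
  push_neg at hpos
  have hpy₀ : 0 < p y₀ := by rw [← hp0]; exact hpm hy₀
  have hden : 0 < E + p y₀ := by linarith
  have hnum : 0 < c - g (p y₀) := by
    by_contra hn
    push_neg at hn
    have : (c - g (p y₀)) / (E + p y₀) ≤ 0 := div_nonpos_iff.2 (Or.inr ⟨hn, hden.le⟩)
    linarith
  set x := y₀ + 1 with hx
  have hxpos : 0 < x := by linarith
  have hpx : p y₀ < p x := hpm (by linarith)
  have hdenx : 0 < E + p x := by linarith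
  have hgmono : g (p y₀) ≤ g (p x) := gmin_mono μ u hu hu0 hpx.le
  rcases le_or_gt (c - g (p x)) 0 with hcase | hcase
  · have h1 : (c - g (p x)) / (E + p x) ≤ 0 := div_nonpos_iff.2 (Or.inr ⟨hcase, hdenx.le⟩)
    have := hmin x hxpos
    linarith
  · have h1 : (c - g (p x)) / (E + p x) ≤ (c - g (p y₀)) / (E + p x) :=
      (div_le_div_iff_of_pos_right hdenx).2 (by linarith)
    have h2 : (c - g (p y₀)) / (E + p x) < (c - g (p y₀)) / (E + p y₀) :=
      div_lt_div_of_pos_left hnum hden (by linarith)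
    have := hmin x hxpos
    linarith


lemma exists_tail_small (μ : Measure ℝ) [IsFiniteMeasure μ] (u : ℝ → ℝ) (hu : Continuous u)
    (p : ℝ → ℝ) (hpm : Monotone p)
    (hU : ∀ᵐ w ∂μ, ∃ x, 0 < x ∧ u w < p x)
    {σ : ℝ} (hσ : 0 < σ) (R : ℝ) :
    ∃ x₂ : ℝ, R ≤ x₂ ∧ 1 ≤ x₂ ∧ (μ {w | p x₂ ≤ u w}).toReal ≤ σ := by
  set A : ℕ → Set ℝ := fun n => {w | p n ≤ u w} with hA
  have hAm : ∀ n, MeasurableSet (A n) :=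
    fun n => measurableSet_le measurable_const hu.measurable
  have hanti : Antitone A := by
    intro m n hmn w hw
    exact le_trans (hpm (by exact_mod_cast hmn)) hw
  have hnull : μ (⋂ n, A n) = 0 := by
    rw [measure_eq_zero_iff_ae_notMem]
    filter_upwards [hU] with w hw hmem
    obtain ⟨x, hx, hlt⟩ := hw
    have h1 : p (⌈x⌉₊ : ℝ) ≤ u w := mem_iInter.1 hmem ⌈x⌉₊
    have h2 : p x ≤ p (⌈x⌉₊ : ℝ) := hpm (Nat.le_ceil x)
    linarith
  have htend : Tendsto (fun n => μ (A n)) atTop (𝓝 0) := by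
    have := tendsto_measure_iInter_atTop (fun n => (hAm n).nullMeasurableSet) hanti
      ⟨0, measure_ne_top μ _⟩
    rwa [hnull] at this
  have hev : ∀ᶠ n : ℕ in atTop, μ (A n) < ENNReal.ofReal σ :=
    htend.eventually (gt_mem_nhds (ENNReal.ofReal_pos.2 hσ))
  obtain ⟨n, hn1, hn2⟩ := (hev.and (eventually_ge_atTop (⌈max R 1⌉₊))).exists
  refine ⟨(n : ℝ), ?_, ?_, ?_⟩
  · calc R ≤ max R 1 := le_max_left _ _
      _ ≤ (⌈max R 1⌉₊ : ℝ) := Nat.le_ceil _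
      _ ≤ (n : ℝ) := by exact_mod_cast hn2
  · calc (1:ℝ) ≤ max R 1 := le_max_right _ _
      _ ≤ (⌈max R 1⌉₊ : ℝ) := Nat.le_ceil _
      _ ≤ (n : ℝ) := by exact_mod_cast hn2
  · exact ENNReal.toReal_le_of_le_ofReal hσ.le hn1.le

lemma exists_global_min (μ : Measure ℝ) [IsFiniteMeasure μ] (hμ1 : μ Set.univ ≤ 1)
    (u : ℝ → ℝ) (hu : Continuous u) (hu0 : ∀ w, 0 ≤ u w)
    (p : ℝ → ℝ) (hp : Continuous p) (hpm : StrictMono p) (hp0 : p 0 = 0)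
    (hU : ∀ᵐ w ∂μ, ∃ x, 0 < x ∧ u w < p x)
    (E c z : ℝ) (hE : 0 < E) (hc : 0 ≤ c) (hz : 0 < z)
    (hFz : (c - ∫ w, min (p z) (u w) ∂μ) / (E + p z) < 0) :
    ∃ y₀, 0 < y₀ ∧ ∀ x, 0 < x →
      (c - ∫ w, min (p y₀) (u w) ∂μ) / (E + p y₀) ≤
        (c - ∫ w, min (p x) (u w) ∂μ) / (E + p x) := by
  set g : ℝ → ℝ := fun t => ∫ w, min t (u w) ∂μ with hg
  set F : ℝ → ℝ := fun x => (c - g (p x)) / (E + p x) with hF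
  have hppos : ∀ {x : ℝ}, 0 < x → 0 < p x := fun {x} hx => hp0 ▸ hpm hx
  have hpnn : ∀ {x : ℝ}, 0 ≤ x → 0 ≤ p x := by
    intro x hx
    rcases hx.eq_or_lt with h | h
    · simp [← h, hp0]
    · exact (hppos h).le
  have hdenpos : ∀ {x : ℝ}, 0 < x → 0 < E + p x := fun {x} hx => by
    have := hppos hx; linarith
  set ε : ℝ := -F z with hε
  have hεpos : 0 < ε := by simpa [hε] using hFz
  have hFzval : F z = -ε := by simp [hε]
  -- lower bound for F via g ≤ t
  have hFlow : ∀ x : ℝ, 0 < x → -(p x) / E ≤ F x := by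
    intro x hx
    have h1 : 0 ≤ g (p x) := gmin_nonneg μ u hu0 (hpnn hx.le)
    have h2 : g (p x) ≤ p x := gmin_le μ hμ1 u hu hu0 (hpnn hx.le)
    have hd := hdenpos hx
    have h3 : -(p x) / (E + p x) ≤ F x := by
      apply (div_le_div_iff_of_pos_right hd).2
      linarith
    have h4 : -(p x) / E ≤ -(p x) / (E + p x) := by
      rw [neg_div, neg_div, neg_le_neg_iff]
      apply div_le_div_of_nonneg_left (hppos hx).le hE
      linarith [hppos hx]
    linarith
  -- small side
  obtain ⟨δ, hδpos, hδ⟩ : ∃ δ > 0, ∀ x : ℝ, |x - 0| < δ → |p x - p 0| < ε * E := by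
    have := Metric.continuous_iff.1 hp 0 (ε * E) (by positivity)
    simpa [Real.dist_eq] using this
  set δ' : ℝ := min z (δ / 2) with hδ'
  have hδ'pos : 0 < δ' := lt_min hz (by linarith)
  have hδ'z : δ' ≤ z := min_le_left _ _
  have hpδ' : p δ' < ε * E := by
    have h1 : |δ' - 0| < δ := by
      rw [sub_zero, abs_of_pos hδ'pos]
      calc δ' ≤ δ / 2 := min_le_right _ _
        _ < δ := by linarith
    have := hδ δ' h1
    rw [hp0, sub_zero] at this
    calc p δ' ≤ |p δ'| := le_abs_self _
      _ < ε * E := this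
  have hsmall : ∀ x : ℝ, 0 < x → x ≤ δ' → F z ≤ F x := by
    intro x hx hxle
    have h1 := hFlow x hx
    have h2 : p x ≤ p δ' := hpm.monotone hxle
    have h3 : -ε ≤ -(p x) / E := by
      rw [le_div_iff₀ hE]
      nlinarith
    linarith [hFzval]
  -- tail side : produce btop ≥ z with tail control
  have htail : ∃ btop : ℝ, z ≤ btop ∧ ∀ x : ℝ, btop ≤ x → min (F z) (F btop) ≤ F x := by
    rcases Classical.em (BddAbove (p '' Ioi 0)) with hbdd | hbdd
    · -- bounded case
      obtain ⟨L, hL⟩ := hbdd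
      have hLz : p z ≤ L := hL ⟨z, hz, rfl⟩
      have hA' : 0 < g (p z) - c := by
        have hd := hdenpos hz
        by_contra hcon
        push_neg at hcon
        have : 0 ≤ F z := div_nonneg (by linarith) hd.le
        linarith [hFz]
      set A' : ℝ := g (p z) - c with hA'def
      set σ₀ : ℝ := A' / (E + L + 1) with hσ₀
      have hELpos : 0 < E + L + 1 := by nlinarith [hppos hz]
      have hσ₀pos : 0 < σ₀ := div_pos hA' hELpos
      obtain ⟨x₂, hx₂R, hx₂1, hx₂meas⟩ :=
        exists_tail_small μ u hu p hpm.monotone hU hσ₀pos z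
      have hx₂pos : (0:ℝ) < x₂ := by linarith
      refine ⟨x₂, hx₂R, fun x hx => le_trans (min_le_right _ _) ?_⟩
      -- F x₂ ≤ F x
      have hxpos : 0 < x := by linarith
      have hp2 : p x₂ ≤ p x := hpm.monotone hx
      have hpzx₂ : p z ≤ p x₂ := hpm.monotone hx₂R
      have hd2 := hdenpos hx₂pos
      have hdx := hdenpos hxpos
      have hgincr : g (p x) - g (p x₂) ≤ σ₀ * (p x - p x₂) := by
        have h1 := gmin_incr μ u hu hu0 hp2
        have hsub : {w | p x₂ < u w} ⊆ {w | p x₂ ≤ u w} :=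
          fun w hw => show p x₂ ≤ u w from le_of_lt hw
        have h2 : (μ {w | p x₂ < u w}).toReal ≤ σ₀ :=
          le_trans (ENNReal.toReal_mono (measure_ne_top μ _) (measure_mono hsub)) hx₂meas
        have h3 : (p x - p x₂) * (μ {w | p x₂ < u w}).toReal ≤ (p x - p x₂) * σ₀ :=
          mul_le_mul_of_nonneg_left h2 (by linarith)
        calc g (p x) - g (p x₂) ≤ _ := h1
          _ ≤ (p x - p x₂) * σ₀ := h3
          _ = σ₀ * (p x - p x₂) := mul_comm _ _
      have hg₂ : c + A' ≤ g (p x₂) := by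
        have := gmin_mono μ u hu hu0 hpzx₂
        simp only [hA'def]
        linarith
      have hpxL : p x ≤ L := hL ⟨x, hxpos, rfl⟩
      have hp₂L : p x₂ ≤ L := hL ⟨x₂, hx₂pos, rfl⟩
      have hσEL : σ₀ * (E + L + 1) = A' := by
        rw [hσ₀, div_mul_cancel₀ _ hELpos.ne']
      show (c - g (p x₂)) / (E + p x₂) ≤ (c - g (p x)) / (E + p x)
      rw [div_le_div_iff₀ hd2 hdx]
      nlinarith [mul_le_mul_of_nonneg_left hgincr hd2.le, hσ₀pos.le,
        mul_le_mul_of_nonneg_right (show σ₀ * (E + p x₂) ≤ σ₀ * (E + L + 1) by nlinarith)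
          (show (0:ℝ) ≤ p x - p x₂ by linarith)]
    · -- unbounded case
      obtain ⟨x₂, hx₂R, hx₂1, hx₂meas⟩ :=
        exists_tail_small μ u hu p hpm.monotone hU (show (0:ℝ) < ε/2 by linarith) z
      have hx₂pos : (0:ℝ) < x₂ := by linarith
      set T : ℝ := p x₂ with hT
      have hTnn : 0 ≤ T := (hppos hx₂pos).le
      rw [not_bddAbove_iff] at hbdd
      obtain ⟨q, ⟨x₃, hx₃pos, hqx₃⟩, hq⟩ := hbdd (max (2 * T / ε) 0)
      set btop : ℝ := max x₃ z with hbdef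
      refine ⟨btop, le_max_right _ _, fun x hx => le_trans (min_le_left _ _) ?_⟩
      have hxpos : 0 < x := lt_of_lt_of_le hz (le_trans (le_max_right _ _) hx)
      have hpx3 : p x₃ ≤ p x := hpm.monotone (le_trans (le_max_left _ _) hx)
      have hpxbig : 2 * T / ε < p x := by
        rw [← hqx₃] at hq
        calc 2 * T / ε ≤ max (2 * T / ε) 0 := le_max_left _ _
          _ < p x₃ := hq
          _ ≤ p x := hpx3
      have hd := hdenpos hxpos
      have hpxnn : 0 ≤ p x := (hppos hxpos).le
      have hm : (μ {w | T < u w}).toReal ≤ ε / 2 := by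
        have hsub : {w | T < u w} ⊆ {w | p x₂ ≤ u w} :=
          fun w hw => show p x₂ ≤ u w from le_of_lt hw
        exact le_trans (ENNReal.toReal_mono (measure_ne_top μ _) (measure_mono hsub)) hx₂meas
      have hgb : g (p x) ≤ T + p x * (μ {w | T < u w}).toReal :=
        gmin_le_add μ hμ1 u hu hu0 hTnn
      have hTb : 2 * T < ε * p x := by
        have := (div_lt_iff₀ hεpos).1 hpxbig
        linarith
      have hfinal : -ε ≤ F x := by
        show -ε ≤ (c - g (p x)) / (E + p x)
        rw [le_div_iff₀ hd]
        have hmn : (0:ℝ) ≤ (μ {w | T < u w}).toReal := ENNReal.toReal_nonneg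
        nlinarith [mul_le_mul_of_nonneg_left hm hpxnn]
      rw [hFzval]
      linarith
  -- assemble: compact minimum
  obtain ⟨btop, hbz, htail⟩ := htail
  have hcont : ContinuousOn F (Icc δ' btop) := by
    have hgc : Continuous g := gmin_lipschitz μ hμ1 u hu hu0
    apply ContinuousOn.div
    · exact (continuous_const.sub (hgc.comp hp)).continuousOn
    · exact (continuous_const.add hp).continuousOn
    · intro x hx
      have : 0 < x := lt_of_lt_of_le hδ'pos hx.1
      exact (hdenpos this).ne'
  have hne : (Icc δ' btop).Nonempty := ⟨z, hδ'z, hbz⟩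
  obtain ⟨y₀, hy₀mem, hy₀min⟩ := isCompact_Icc.exists_isMinOn hne hcont
  refine ⟨y₀, lt_of_lt_of_le hδ'pos hy₀mem.1, ?_⟩
  intro x hx
  have hzmem : z ∈ Icc δ' btop := ⟨hδ'z, hbz⟩
  have hFz_ge : F y₀ ≤ F z := hy₀min hzmem
  rcases le_or_gt x btop with hxb | hxb
  · rcases le_or_gt δ' x with hdx | hdx
    · exact hy₀min ⟨hdx, hxb⟩
    · exact le_trans hFz_ge (hsmall x hx hdx.le)
  · have hbmem : btop ∈ Icc δ' btop := ⟨le_trans hδ'z hbz, le_rfl⟩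
    have hFb : F y₀ ≤ F btop := hy₀min hbmem
    calc F y₀ ≤ min (F z) (F btop) := le_min hFz_ge hFb
      _ ≤ F x := htail x hxb.le

end Aux

theorem nuPlus_nuMinus_lower_bounds
    (s : ℝ → ℝ) (hs : Continuous s) (hmono : StrictMono s) (hs0 : s 0 = 0)
    (ν : Measure ℝ) [IsProbabilityMeasure ν] (hν0 : ν {0} = 0) :
    ∀ z : ℝ, 0 < z →
      nuPlus s ν z ≥
        max (cY s ν (-z) - cY s ν z) 0 / (s z + |s (-z)|) + (ν (Ici z)).toReal ∧
      nuMinus s ν z ≥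
        max (cY s ν z - cY s ν (-z)) 0 / (s z + |s (-z)|) + (ν (Iic (-z))).toReal := by
  intro z hz
  have hsz : 0 < s z := by rw [← hs0]; exact hmono hz
  have hsnz : s (-z) < 0 := by rw [← hs0]; exact hmono (by linarith)
  have habs : |s (-z)| = -s (-z) := abs_of_neg hsnz
  have hd : 0 < s z + |s (-z)| := by rw [habs]; linarith
  constructor
  · -- plus side
    have hμ1 : (ν.restrict (Iio (0:ℝ))) Set.univ ≤ 1 := by
      rw [Measure.restrict_apply_univ]; exact prob_le_one
    have hppc : Continuous (fun x : ℝ => -s (-x)) := (hs.comp continuous_neg).neg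
    have hppm : StrictMono (fun x : ℝ => -s (-x)) := by
      intro a b hab
      have := hmono (neg_lt_neg hab)
      simp only [neg_lt_neg_iff]
      linarith
    have hpp0 : -s (-(0:ℝ)) = 0 := by rw [neg_zero, hs0, neg_zero]
    have hupc : Continuous (fun w : ℝ => |s w|) := hs.abs
    have hup0 : ∀ w : ℝ, 0 ≤ |s w| := fun w => abs_nonneg _
    have hU : ∀ᵐ w ∂(ν.restrict (Iio (0:ℝ))), ∃ x, 0 < x ∧ |s w| < -s (-x) := by
      filter_upwards [ae_restrict_mem measurableSet_Iio] with w hw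
      have hw' : w < 0 := hw
      refine ⟨-w + 1, by linarith, ?_⟩
      have h1 : s w < 0 := by rw [← hs0]; exact hmono hw'
      have h2 : s (w - 1) < s w := hmono (by linarith)
      rw [abs_of_neg h1, show -(-w + 1) = w - 1 by ring]
      linarith
    have hcnn : 0 ≤ cY s ν z := by
      simp only [cY, if_pos hz.le]
      apply setIntegral_nonneg measurableSet_Ici
      intro w hw
      exact le_min hsz.le (by rw [← hs0]; exact hmono.monotone hw)
    have hcYneg : ∀ x : ℝ, 0 < x →
        cY s ν (-x) = ∫ w, min (-s (-x)) (|s w|) ∂(ν.restrict (Iio (0:ℝ))) := by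
      intro x hx
      have h1 : s (-x) < 0 := by rw [← hs0]; exact hmono (by linarith)
      simp only [cY, if_neg (by linarith : ¬ (0:ℝ) ≤ -x)]
      rw [abs_of_neg h1]
    have hslope : ∀ x : ℝ, 0 < x →
        slopeYPlus s ν z x =
          (cY s ν z - ∫ w, min (-s (-x)) (|s w|) ∂(ν.restrict (Iio (0:ℝ)))) /
            (s z + -s (-x)) := by
      intro x hx
      rw [slopeYPlus, hcYneg x hx, show s z - s (-x) = s z + -s (-x) by ring]
    have key : max (cY s ν (-z) - cY s ν z) 0 / (s z + |s (-z)|) ≤ zetaPlus s ν z := by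
      have hslopez : slopeYPlus s ν z z =
          -((cY s ν (-z) - cY s ν z) / (s z + |s (-z)|)) := by
        rw [slopeYPlus, habs, show s z - s (-z) = s z + -s (-z) by ring, ← neg_div]
        ring_nf
      by_cases hne : (argYPlus s ν z).Nonempty
      · obtain ⟨y₀, hy₀⟩ := hne
        have hy₀' : 0 < y₀ ∧ ∀ x, 0 < x → slopeYPlus s ν z y₀ ≤ slopeYPlus s ν z x := hy₀
        obtain ⟨hy₀pos, hy₀min⟩ := hy₀'
        have hinf : sInf (slopeYPlus s ν z '' Ioi 0) = slopeYPlus s ν z y₀ :=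
          IsLeast.csInf_eq ⟨⟨y₀, hy₀pos, rfl⟩, by rintro v ⟨x, hx, rfl⟩; exact hy₀min x hx⟩
        have hzeta : zetaPlus s ν z = -slopeYPlus s ν z y₀ := by
          rw [zetaPlus, if_pos ⟨y₀, hy₀⟩, hinf]
        have h1 : slopeYPlus s ν z y₀ ≤ slopeYPlus s ν z z := hy₀min z hz
        have h3 : slopeYPlus s ν z y₀ ≤ 0 := by
          rw [hslope y₀ hy₀pos]
          exact minimizer_nonpos (ν.restrict (Iio (0:ℝ))) (fun w => |s w|) hupc hup0
            (fun x : ℝ => -s (-x)) hppm hpp0 (s z) (cY s ν z) hsz y₀ hy₀pos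
            (fun x hx => by
              rw [← hslope y₀ hy₀pos, ← hslope x hx]; exact hy₀min x hx)
        rw [hzeta]
        rcases max_cases (cY s ν (-z) - cY s ν z) 0 with ⟨hmax, hcase⟩ | ⟨hmax, hcase⟩
        · rw [hmax]
          rw [hslopez] at h1
          linarith
        · rw [hmax, zero_div]
          linarith
      · have hzeta : zetaPlus s ν z = 0 := by rw [zetaPlus, if_neg hne]
        rw [hzeta]
        have hA : cY s ν (-z) - cY s ν z ≤ 0 := by
          by_contra hA
          push_neg at hA
          apply hne
          have hFz : (cY s ν z - ∫ w, min (-s (-z)) (|s w|) ∂(ν.restrict (Iio (0:ℝ)))) /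
              (s z + -s (-z)) < 0 := by
            rw [← hslope z hz, hslopez]
            have : 0 < (cY s ν (-z) - cY s ν z) / (s z + |s (-z)|) :=
              div_pos (by linarith) hd
            linarith
          obtain ⟨y₀, hy₀pos, hy₀min⟩ := exists_global_min (ν.restrict (Iio (0:ℝ))) hμ1
            (fun w => |s w|) hupc hup0 (fun x : ℝ => -s (-x)) hppc hppm hpp0 hU
            (s z) (cY s ν z) z hsz hcnn hz hFz
          refine ⟨y₀, hy₀pos, fun x hx => ?_⟩
          rw [hslope y₀ hy₀pos, hslope x hx]
          exact hy₀min x hx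
        rw [max_eq_right hA, zero_div]
    rw [ge_iff_le, nuPlus]
    linarith
  · -- minus side
    have hE : 0 < -s (-z) := by linarith
    have hμ1 : (ν.restrict (Ici (0:ℝ))) Set.univ ≤ 1 := by
      rw [Measure.restrict_apply_univ]; exact prob_le_one
    have hupc : Continuous (fun w : ℝ => |s w|) := hs.abs
    have hup0 : ∀ w : ℝ, 0 ≤ |s w| := fun w => abs_nonneg _
    have hU : ∀ᵐ w ∂(ν.restrict (Ici (0:ℝ))), ∃ x, 0 < x ∧ |s w| < s x := by
      filter_upwards [ae_restrict_mem measurableSet_Ici] with w hw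
      have hw' : (0:ℝ) ≤ w := hw
      refine ⟨w + 1, by linarith, ?_⟩
      have h1 : 0 ≤ s w := by rw [← hs0]; exact hmono.monotone hw'
      rw [abs_of_nonneg h1]
      exact hmono (by linarith)
    have hbnn : 0 ≤ cY s ν (-z) := by
      simp only [cY, if_neg (by linarith : ¬ (0:ℝ) ≤ -z)]
      apply setIntegral_nonneg measurableSet_Iio
      intro w hw
      exact le_min (abs_nonneg _) (abs_nonneg _)
    have hcYpos : ∀ x : ℝ, 0 < x →
        cY s ν x = ∫ w, min (s x) (|s w|) ∂(ν.restrict (Ici (0:ℝ))) := by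
      intro x hx
      simp only [cY, if_pos hx.le]
      apply setIntegral_congr_fun measurableSet_Ici
      intro w hw
      have h1 : |s w| = s w := abs_of_nonneg (by rw [← hs0]; exact hmono.monotone hw)
      simp only [h1]
    have hslope : ∀ x : ℝ, 0 < x →
        slopeYMinus s ν z x =
          -((cY s ν (-z) - ∫ w, min (s x) (|s w|) ∂(ν.restrict (Ici (0:ℝ)))) /
            (-s (-z) + s x)) := by
      intro x hx
      rw [slopeYMinus, hcYpos x hx, show s x - s (-z) = -s (-z) + s x by ring, ← neg_div]
      ring_nf
    have key : max (cY s ν z - cY s ν (-z)) 0 / (s z + |s (-z)|) ≤ zetaMinus s ν z := by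
      have hslopez : slopeYMinus s ν z z =
          (cY s ν z - cY s ν (-z)) / (s z + |s (-z)|) := by
        rw [slopeYMinus, habs, show s z - s (-z) = s z + -s (-z) by ring]
      by_cases hne : (argYMinus s ν z).Nonempty
      · obtain ⟨y₀, hy₀⟩ := hne
        have hy₀' : 0 < y₀ ∧ ∀ x, 0 < x → slopeYMinus s ν z x ≤ slopeYMinus s ν z y₀ := hy₀
        obtain ⟨hy₀pos, hy₀max⟩ := hy₀'
        have hsup : sSup (slopeYMinus s ν z '' Ioi 0) = slopeYMinus s ν z y₀ :=
          IsGreatest.csSup_eq ⟨⟨y₀, hy₀pos, rfl⟩, by rintro v ⟨x, hx, rfl⟩; exact hy₀max x hx⟩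
        have hzeta : zetaMinus s ν z = slopeYMinus s ν z y₀ := by
          rw [zetaMinus, if_pos ⟨y₀, hy₀⟩, hsup]
        have h1 : slopeYMinus s ν z z ≤ slopeYMinus s ν z y₀ := hy₀max z hz
        have h3 : 0 ≤ slopeYMinus s ν z y₀ := by
          have hnp := minimizer_nonpos (ν.restrict (Ici (0:ℝ))) (fun w => |s w|) hupc hup0
            s hmono hs0 (-s (-z)) (cY s ν (-z)) hE y₀ hy₀pos
            (fun x hx => by
              have h := hy₀max x hx
              rw [hslope y₀ hy₀pos, hslope x hx] at h
              linarith)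
          rw [hslope y₀ hy₀pos]
          linarith
        rw [hzeta]
        rcases max_cases (cY s ν z - cY s ν (-z)) 0 with ⟨hmax, hcase⟩ | ⟨hmax, hcase⟩
        · rw [hmax]
          rw [hslopez] at h1
          linarith
        · rw [hmax, zero_div]
          linarith
      · have hzeta : zetaMinus s ν z = 0 := by rw [zetaMinus, if_neg hne]
        rw [hzeta]
        have hA : cY s ν z - cY s ν (-z) ≤ 0 := by
          by_contra hA
          push_neg at hA
          apply hne
          have hFz : (cY s ν (-z) - ∫ w, min (s z) (|s w|) ∂(ν.restrict (Ici (0:ℝ)))) /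
              (-s (-z) + s z) < 0 := by
            have h2 := hslope z hz
            rw [hslopez] at h2
            have : 0 < (cY s ν z - cY s ν (-z)) / (s z + |s (-z)|) :=
              div_pos (by linarith) hd
            linarith
          obtain ⟨y₀, hy₀pos, hy₀min⟩ := exists_global_min (ν.restrict (Ici (0:ℝ))) hμ1
            (fun w => |s w|) hupc hup0 s hs hmono hs0 hU
            (-s (-z)) (cY s ν (-z)) z hE hbnn hz hFz
          refine ⟨y₀, hy₀pos, fun x hx => ?_⟩
          rw [hslope y₀ hy₀pos, hslope x hx]
          have := hy₀min x hx
          linarith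
        rw [max_eq_right hA, zero_div]
    rw [ge_iff_le, nuMinus]
    linarith
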